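/- Let C₈ be the cyclic group of order 8. Then the unit group of the integral group ring ℤC₈ is infinite, but contains no subgroup isomorphic to ℤ × ℤ; that is, there is no injective group homomorphism ℤ × ℤ → (ℤC₈)ˣ. -/

import Mathlib

open MonoidAlgebra Complex
noncomputable section
abbrev G8 := Multiplicative (ZMod 8)
abbrev R8 := MonoidAlgebra ℤ G8
section chi
variable {M : Type*} [Monoid M] (m : M) (hm : m ^ 8 = 1)
include hm in
lemma powmod (n : ℕ) : m ^ (n % 8) = m ^ n := by
  conv_rhs => rw [← Nat.div_add_mod n 8, pow_add, pow_mul, hm, one_pow, one_mul]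
def chi8 : G8 →* M where
  toFun x := m ^ (Multiplicative.toAdd x).val
  map_one' := by simp
  map_mul' x y := by
    show m ^ (Multiplicative.toAdd x + Multiplicative.toAdd y).val = _
    rw [ZMod.val_add, powmod m hm, pow_add]
lemma chi8_apply (k : ZMod 8) : chi8 m hm (Multiplicative.ofAdd k) = m ^ k.val := rfl
end chi
section ev
variable {S : Type*} [CommRing S] (s : S) (hs : s ^ 8 = 1)
def ev : R8 →ₐ[ℤ] S := MonoidAlgebra.lift ℤ S G8 (chi8 s hs)
lemma ev_single (k : ZMod 8) (c : ℤ) :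
    ev s hs (MonoidAlgebra.single (Multiplicative.ofAdd k) c) = c • s ^ k.val := by
  rw [ev, MonoidAlgebra.lift_single, chi8_apply]
lemma ev_apply (a : R8) :
    ev s hs a = ∑ k : ZMod 8, a.coeff (Multiplicative.ofAdd k) • s ^ k.val := by
  conv_lhs => rw [← MonoidAlgebra.sum_coeff_single a]
  rw [map_finsuppSum]
  rw [Finsupp.sum_fintype _ _ (fun g => by simp)]
  refine Fintype.sum_equiv Multiplicative.toAdd _ _ fun g => ?_
  exact ev_single s hs (Multiplicative.toAdd g) (a.coeff g)
lemma sum_zmod8 {M : Type*} [AddCommMonoid M] (f : ZMod 8 → M) :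
    ∑ k : ZMod 8, f k = f 0 + f 1 + f 2 + f 3 + f 4 + f 5 + f 6 + f 7 :=
  Fin.sum_univ_eight f
lemma ev_apply' (a : R8) :
    ev s hs a = a.coeff (Multiplicative.ofAdd (0 : ZMod 8)) • s ^ 0
      + a.coeff (Multiplicative.ofAdd (1 : ZMod 8)) • s ^ 1
      + a.coeff (Multiplicative.ofAdd (2 : ZMod 8)) • s ^ 2
      + a.coeff (Multiplicative.ofAdd (3 : ZMod 8)) • s ^ 3
      + a.coeff (Multiplicative.ofAdd (4 : ZMod 8)) • s ^ 4
      + a.coeff (Multiplicative.ofAdd (5 : ZMod 8)) • s ^ 5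
      + a.coeff (Multiplicative.ofAdd (6 : ZMod 8)) • s ^ 6
      + a.coeff (Multiplicative.ofAdd (7 : ZMod 8)) • s ^ 7 := by
  rw [ev_apply, sum_zmod8]
  rfl
end ev

def gg : R8 := MonoidAlgebra.single (Multiplicative.ofAdd (1 : ZMod 8)) 1

lemma ev_gg {S : Type*} [CommRing S] (s : S) (hs : s ^ 8 = 1) : ev s hs gg = s := by
  rw [gg, ev_single, show (1 : ZMod 8).val = 1 from rfl]; simp

lemma gg_pow8 : gg ^ 8 = 1 := by
  rw [gg, MonoidAlgebra.single_pow, one_pow]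
  rw [show (Multiplicative.ofAdd (1 : ZMod 8)) ^ 8 = 1 by decide]
  rfl

def UU : R8 := gg + 2*gg^2 + gg^3 - gg^5 - gg^6 - gg^7
def VV : R8 := gg - gg^2 + gg^3 - gg^5 + 2*gg^6 - gg^7

lemma UV : UU * VV = 1 := by
  rw [UU, VV]
  linear_combination (1 - gg^2 - gg^3 - gg^5 + gg^6) * gg_pow8

def u8 : R8ˣ := ⟨UU, VV, UV, by rw [mul_comm]; exact UV⟩

-- the complex evaluation
def sq2 : ℝ := Real.sqrt 2
lemma sq2_sq : (sq2 : ℂ)^2 = 2 := by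
  have : sq2 ^ 2 = 2 := Real.sq_sqrt (by norm_num)
  exact_mod_cast this
def z0 : ℂ := ((sq2/2 : ℝ) : ℂ) * (1 + I)
lemma z0_sq : z0 ^ 2 = I := by
  rw [z0]
  have h := sq2_sq
  push_cast
  linear_combination ((sq2:ℂ)^2/4) * I_sq + (I/2) * h
lemma z0_pow8 : z0 ^ 8 = 1 := by
  have : z0 ^ 8 = ((z0^2)^2)^2 := by ring
  rw [this, z0_sq, I_sq]; norm_num

def Fc : R8 →ₐ[ℤ] ℂ := ev z0 z0_pow8

lemma Fc_UU : Fc UU = ((3 + 2*sq2 : ℝ) : ℂ) * I := by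
  have h1 : Fc gg = z0 := ev_gg _ _
  have h2 : z0^2 = I := z0_sq
  have h3 : z0^3 = I * z0 := by rw [pow_succ, h2]
  have h5 : z0^5 = -z0 := by
    have : z0^5 = (z0^2)^2 * z0 := by ring
    rw [this, h2, I_sq]; ring
  have h6 : z0^6 = -I := by
    have : z0^6 = (z0^2)^2 * z0^2 := by ring
    rw [this, h2, I_sq]; ring
  have h7 : z0^7 = -(I * z0) := by
    have : z0^7 = (z0^2)^2 * z0^3 := by ring
    rw [this, h2, h3, I_sq]; ring
  have : Fc UU = z0 + 2*z0^2 + z0^3 - z0^5 - z0^6 - z0^7 := by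
    simp [UU, map_add, map_sub, map_mul, map_pow, map_ofNat, h1]
  rw [this, h2, h3, h5, h6, h7, z0]
  push_cast
  linear_combination (sq2 : ℂ) * I_sq

lemma abs_Fc_UU : ‖Fc UU‖ = 3 + 2*sq2 := by
  rw [Fc_UU]
  have h0 : (0:ℝ) ≤ sq2 := Real.sqrt_nonneg 2
  rw [norm_mul, Complex.norm_I, mul_one, Complex.norm_real, Real.norm_eq_abs]
  exact abs_of_nonneg (by linarith)

lemma infinite_units : Infinite R8ˣ := by
  apply Infinite.of_injective (fun n : ℕ => u8 ^ n)
  intro a b hab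
  have : ‖Fc UU‖ ^ a = ‖Fc UU‖ ^ b := by
    have := congrArg (fun u : R8ˣ => ‖Fc u.val‖) hab
    simpa [map_pow, u8] using this
  have h1 : (1:ℝ) < ‖Fc UU‖ := by
    rw [abs_Fc_UU]
    have : (1:ℝ) ≤ sq2 := by
      rw [sq2, show (1:ℝ) = Real.sqrt 1 by simp]
      exact Real.sqrt_le_sqrt (by norm_num)
    linarith
  exact pow_right_injective₀ (by linarith) h1.ne' this

-- number field
abbrev K8 := CyclotomicField 8 ℚ
instance : IsCyclotomicExtension {8} ℚ K8 := CyclotomicField.isCyclotomicExtension 8 ℚ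
instance : NumberField K8 := IsCyclotomicExtension.numberField {8} ℚ K8
def ζK : K8 := IsCyclotomicExtension.zeta 8 ℚ K8
lemma hζK : IsPrimitiveRoot ζK ((8:ℕ+) : ℕ) := IsCyclotomicExtension.zeta_spec 8 ℚ K8
def ζO : NumberField.RingOfIntegers K8 := hζK.toInteger
lemma ζO_pow8 : ζO ^ 8 = 1 := by
  have := hζK.toInteger_isPrimitiveRoot
  exact_mod_cast this.pow_eq_one

def e1 : R8 →ₐ[ℤ] ℤ := ev 1 (one_pow 8)
def e2 : R8 →ₐ[ℤ] ℤ := ev (-1) (by norm_num)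
def iG : GaussianInt := ⟨0, 1⟩
lemma iG_sq : iG ^ 2 = -1 := by
  ext <;> simp [iG, pow_two, Zsqrtd.re_mul, Zsqrtd.im_mul]
lemma iG_pow8 : iG ^ 8 = 1 := by
  have : iG ^ 8 = ((iG ^ 2) ^ 2) ^ 2 := by ring
  rw [this, iG_sq]; norm_num
def e3 : R8 →ₐ[ℤ] GaussianInt := ev iG iG_pow8
def e4 : R8 →ₐ[ℤ] (NumberField.RingOfIntegers K8) := ev ζO ζO_pow8

-- helper lemmas about irrationality
lemma irr_of_sq_half {x : ℝ} (h : x ^ 2 = 1 / 2) : Irrational x := by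
  rintro ⟨q, hq⟩
  apply irrational_sqrt_two
  refine ⟨|2 * q|, ?_⟩
  have h2 : ((2 * q : ℚ) : ℝ) ^ 2 = 2 := by push_cast; rw [hq]; nlinarith [h]
  rw [Rat.cast_abs, ← Real.sqrt_sq_eq_abs, h2]

lemma irr_linear {x : ℝ} (hx : Irrational x) {m n : ℤ} (h : (m : ℝ) + x * (n : ℝ) = 0) :
    m = 0 ∧ n = 0 := by
  by_cases hn : n = 0
  · subst hn; norm_num at h; exact ⟨by exact_mod_cast h, rfl⟩
  · exfalso
    apply hx
    refine ⟨-(m : ℚ) / (n : ℚ), ?_⟩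
    have hn' : ((n : ℚ) : ℝ) ≠ 0 := by exact_mod_cast hn
    push_cast
    field_simp
    linarith

-- the embedding
def φ8 : K8 →+* ℂ := Classical.arbitrary _
def zC : ℂ := φ8 ζK
lemma zC_pow8 : zC ^ 8 = 1 := by
  have h := hζK.pow_eq_one
  norm_num at h
  rw [zC, ← map_pow, h, map_one]
lemma zC_pow4 : zC ^ 4 = -1 := by
  have h8 : (zC ^ 4 - 1) * (zC ^ 4 + 1) = 0 := by linear_combination zC_pow8
  rcases mul_eq_zero.1 h8 with h | h
  · exfalso
    have hne : ζK ^ 4 ≠ 1 := hζK.pow_ne_one_of_pos_of_lt (by norm_num) (by norm_num)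
    apply hne
    have h1 : zC ^ 4 = 1 := sub_eq_zero.mp h
    rw [zC, ← map_pow] at h1
    exact φ8.injective (by rw [h1, map_one])
  · linear_combination h

lemma zC_abs : zC.re ^ 2 + zC.im ^ 2 = 1 := by
  have h4 : ‖zC‖ ^ 4 = 1 := by
    rw [← norm_pow, zC_pow4]; simp
  have hfac : (‖zC‖ ^ 2 - 1) * (‖zC‖ ^ 2 + 1) = 0 := by
    linear_combination h4
  have h2 : ‖zC‖ ^ 2 = 1 := by
    rcases mul_eq_zero.1 hfac with h | h
    · exact sub_eq_zero.mp h
    · nlinarith [norm_nonneg zC]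
  rw [Complex.sq_norm, Complex.normSq_apply] at h2
  nlinarith [h2]

lemma zC_sq : zC ^ 2 = I ∨ zC ^ 2 = -I := by
  have hfac : (zC ^ 2 - I) * (zC ^ 2 + I) = 0 := by
    linear_combination zC_pow4 - Complex.I_sq
  rcases mul_eq_zero.1 hfac with h | h
  · exact Or.inl (sub_eq_zero.mp h)
  · right; linear_combination h

lemma indep (d0 d1 d2 d3 : ℤ)
    (h : (d0 : ℂ) + d1 * zC + d2 * zC ^ 2 + d3 * zC ^ 3 = 0) :
    d0 = 0 ∧ d1 = 0 ∧ d2 = 0 ∧ d3 = 0 := by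
  have habs := zC_abs
  obtain ⟨q, hq1, hq⟩ : ∃ q : ℤ, (q = 1 ∨ q = -1) ∧ zC ^ 2 = (q : ℂ) * I := by
    rcases zC_sq with h2 | h2
    · exact ⟨1, Or.inl rfl, by rw [h2]; push_cast; ring⟩
    · exact ⟨-1, Or.inr rfl, by rw [h2]; push_cast; ring⟩
  have hzre : zC.re * zC.re - zC.im * zC.im = 0 := by
    have := congrArg Complex.re hq
    simpa [pow_two, Complex.mul_re] using this
  have hx2 : zC.re ^ 2 = 1 / 2 := by nlinarith [habs, hzre]
  have hirr : Irrational zC.re := irr_of_sq_half hx2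
  have hy2 : (zC.im - zC.re) * (zC.im + zC.re) = 0 := by nlinarith [hzre]
  obtain ⟨e, he1, hyx⟩ : ∃ e : ℤ, (e = 1 ∨ e = -1) ∧ zC.im = (e : ℝ) * zC.re := by
    rcases mul_eq_zero.1 hy2 with hyx | hyx
    · exact ⟨1, Or.inl rfl, by push_cast; linarith [sub_eq_zero.mp hyx]⟩
    · exact ⟨-1, Or.inr rfl, by push_cast; linarith [add_eq_zero_iff_eq_neg.mp hyx]⟩
  have h3 : zC ^ 3 = zC ^ 2 * zC := by ring
  rw [h3, hq] at h
  have hre := congrArg Complex.re h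
  have him := congrArg Complex.im h
  simp [Complex.add_re, Complex.mul_re, Complex.mul_im, Complex.add_im] at hre him
  rw [hyx] at hre him
  have e1 := irr_linear hirr (m := d0) (n := d1 - d3 * q * e)
    (by push_cast; linear_combination hre)
  have e2 := irr_linear hirr (m := q * d2) (n := e * d1 + q * d3)
    (by push_cast; linear_combination him)
  rcases hq1 with rfl | rfl <;> rcases he1 with rfl | rfl <;> omega

def ψ8 : NumberField.RingOfIntegers K8 →+* ℂ := φ8.comp (algebraMap _ K8)

lemma ψ8_ζO : ψ8 ζO = zC := rfl

lemma evals_zero (a : R8) (h1 : e1 a = 0) (h2 : e2 a = 0)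
    (h3 : e3 a = 0) (h4 : e4 a = 0) : a = 0 := by
  rw [e1, ev_apply'] at h1
  rw [e2, ev_apply'] at h2
  rw [e3, ev_apply'] at h3
  rw [e4, ev_apply'] at h4
  set c0 := a.coeff (Multiplicative.ofAdd (0 : ZMod 8))
  set c1 := a.coeff (Multiplicative.ofAdd (1 : ZMod 8))
  set c2 := a.coeff (Multiplicative.ofAdd (2 : ZMod 8))
  set c3 := a.coeff (Multiplicative.ofAdd (3 : ZMod 8))
  set c4 := a.coeff (Multiplicative.ofAdd (4 : ZMod 8))
  set c5 := a.coeff (Multiplicative.ofAdd (5 : ZMod 8))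
  set c6 := a.coeff (Multiplicative.ofAdd (6 : ZMod 8))
  set c7 := a.coeff (Multiplicative.ofAdd (7 : ZMod 8))
  -- h1 : sum = 0
  simp only [one_pow, smul_eq_mul, mul_one] at h1
  -- h2 : alternating sum
  have h2' : c0 - c1 + c2 - c3 + c4 - c5 + c6 - c7 = 0 := by
    rw [show ((-1:ℤ))^0 = 1 by norm_num] at h2
    norm_num at h2
    linarith [h2]
  -- h3 : to ℂ
  have h3c := congrArg GaussianInt.toComplex h3
  simp only [map_add, map_zsmul, map_pow, map_zero] at h3c
  rw [show GaussianInt.toComplex iG = I from by simp [iG, GaussianInt.toComplex_def]] at h3c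
  have hre3 : (c0 : ℝ) - c2 + c4 - c6 = 0 := by
    have := congrArg Complex.re h3c
    simp [pow_succ, Complex.mul_re, Complex.mul_im] at this
    linarith [this]
  have him3 : (c1 : ℝ) - c3 + c5 - c7 = 0 := by
    have := congrArg Complex.im h3c
    simp [pow_succ, Complex.mul_re, Complex.mul_im] at this
    linarith [this]
  have h3a : c0 - c2 + c4 - c6 = 0 := by exact_mod_cast hre3
  have h3b : c1 - c3 + c5 - c7 = 0 := by exact_mod_cast him3
  -- h4 : to ℂ
  have h4c := congrArg ψ8 h4
  simp only [map_add, zsmul_eq_mul, map_mul, map_pow, map_intCast, map_zero, ψ8_ζO] at h4c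
  have hd : ((c0 - c4 : ℤ) : ℂ) + ((c1 - c5 : ℤ) : ℂ) * zC + ((c2 - c6 : ℤ) : ℂ) * zC ^ 2
      + ((c3 - c7 : ℤ) : ℂ) * zC ^ 3 = 0 := by
    push_cast
    linear_combination h4c - ((c4:ℂ) + (c5:ℂ) * zC + (c6:ℂ) * zC ^ 2 + (c7:ℂ) * zC ^ 3) * zC_pow4
  obtain ⟨hd0, hd1, hd2, hd3⟩ := indep _ _ _ _ hd
  -- conclude coefficients are zero
  have hall : ∀ k : ZMod 8, a.coeff (Multiplicative.ofAdd k) = 0 := by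
    intro k
    have : k = 0 ∨ k = 1 ∨ k = 2 ∨ k = 3 ∨ k = 4 ∨ k = 5 ∨ k = 6 ∨ k = 7 := by revert k; decide
    rcases this with rfl|rfl|rfl|rfl|rfl|rfl|rfl|rfl <;> omega
  ext g
  have := hall (Multiplicative.toAdd g)
  simpa using this

-- Finiteness of Gaussian integer units
lemma gauss_units_finite : Finite GaussianIntˣ := by
  have key : ∀ u : GaussianIntˣ, ((u : GaussianInt).re, (u : GaussianInt).im) ∈
      Set.Icc ((-1, -1) : ℤ × ℤ) (1, 1) := by
    intro u
    have hn : (u : GaussianInt).norm = 1 := (Zsqrtd.norm_eq_one_iff' (by norm_num) _).2 u.isUnit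
    rw [Zsqrtd.norm_def] at hn
    refine ⟨⟨?_, ?_⟩, ?_, ?_⟩ <;> dsimp only <;>
      nlinarith [hn, sq_nonneg ((u : GaussianInt).re + 1), sq_nonneg ((u : GaussianInt).re - 1),
        sq_nonneg ((u : GaussianInt).im + 1), sq_nonneg ((u : GaussianInt).im - 1),
        sq_nonneg ((u : GaussianInt).re), sq_nonneg ((u : GaussianInt).im)]
  have : Finite (Set.Icc ((-1, -1) : ℤ × ℤ) (1, 1)) := (Set.finite_Icc _ _).to_subtype
  refine Finite.of_injective (fun u => (⟨_, key u⟩ : Set.Icc ((-1, -1) : ℤ × ℤ) (1, 1))) ?_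
  intro u v huv
  simp only [Subtype.mk_eq_mk, Prod.mk.injEq] at huv
  apply Units.ext
  ext
  · exact huv.1
  · exact huv.2

-- rank of K8
lemma rank_K8 : NumberField.Units.rank K8 = 1 := by
  rw [NumberField.Units.rank, NumberField.InfinitePlace.card_eq_nrRealPlaces_add_nrComplexPlaces,
    IsCyclotomicExtension.Rat.nrRealPlaces_eq_zero (n := 8) K8 (by norm_num),
    IsCyclotomicExtension.Rat.nrComplexPlaces_eq_totient_div_two (n := 8) K8]
  decide

open NumberField


open NumberField

instance : Module ℤ (Additive ((𝓞 K8)ˣ ⧸ Units.torsion K8)) := AddCommGroup.toIntModule (Additive ((𝓞 K8)ˣ ⧸ Units.torsion K8))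

lemma no_Z2 : ¬ ∃ f : Multiplicative (ℤ × ℤ) →* R8ˣ, Function.Injective f := by
  rintro ⟨f, hf⟩
  let q : (𝓞 K8)ˣ →* (𝓞 K8)ˣ ⧸ Units.torsion K8 := QuotientGroup.mk' (Units.torsion K8)
  let π : R8ˣ →* (𝓞 K8)ˣ := Units.map e4.toRingHom.toMonoidHom
  let hAdd : (ℤ × ℤ) →+ Additive ((𝓞 K8)ˣ ⧸ Units.torsion K8) :=
    MonoidHom.toAdditiveRight (q.comp (π.comp f))
  let B := Units.basisModTorsion K8
  let i0 : Fin (Units.rank K8) := ⟨0, by rw [rank_K8]; norm_num⟩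
  let ψ : (ℤ × ℤ) →+ ℤ :=
    (Finsupp.applyAddHom i0).comp ((B.repr.toLinearMap.toAddMonoidHom).comp hAdd)
  have hψ : ∀ v : ℤ × ℤ, ψ v = v.1 * ψ (1, 0) + v.2 * ψ (0, 1) := by
    intro v
    have hv : v = v.1 • ((1, 0) : ℤ × ℤ) + v.2 • ((0, 1) : ℤ × ℤ) := by
      ext <;> simp
    conv_lhs => rw [hv]
    rw [map_add, map_zsmul, map_zsmul, smul_eq_mul, smul_eq_mul]
  set α := ψ (1, 0) with hα
  set β := ψ (0, 1) with hβ
  set x0 : ℤ × ℤ := if α = 0 ∧ β = 0 then (1, 0) else (β, -α) with hx0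
  have hx0ψ : ψ x0 = 0 := by
    rw [hx0]
    split_ifs with hc
    · simp [hψ, hc.1, hc.2]
    · rw [hψ]; dsimp; ring
  have hx0ne : x0 ≠ 0 := by
    rw [hx0]
    split_ifs with hc
    · intro h
      exact one_ne_zero (congrArg Prod.fst h)
    · intro h
      have hb : β = 0 := congrArg Prod.fst h
      have ha : -α = 0 := congrArg Prod.snd h
      exact hc ⟨by omega, hb⟩
  have key : ∀ n : ℤ, π (f (Multiplicative.ofAdd (n • x0))) ∈ Units.torsion K8 := by
    intro n
    have hψn : ψ (n • x0) = 0 := by rw [map_zsmul, hx0ψ, smul_zero]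
    have hrepr : B.repr (hAdd (n • x0)) = 0 := by
      ext j
      have hj : j = i0 := by
        have hlt' : (j : ℕ) < 1 := by rw [← rank_K8]; exact j.isLt
        apply Fin.ext
        show (j : ℕ) = 0
        omega
      rw [hj]
      exact hψn
    have h0 : hAdd (n • x0) = 0 := by
      have := congrArg B.repr.symm hrepr
      simpa using this
    have hq1 : q (π (f (Multiplicative.ofAdd (n • x0)))) = 1 := h0
    exact (QuotientGroup.eq_one_iff _).mp hq1
  haveI : Finite GaussianIntˣ := gauss_units_finite
  let T : ℤ → ℤˣ × ℤˣ × GaussianIntˣ × (Units.torsion K8) := fun n =>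
    (Units.map e1.toRingHom.toMonoidHom (f (Multiplicative.ofAdd (n • x0))),
     Units.map e2.toRingHom.toMonoidHom (f (Multiplicative.ofAdd (n • x0))),
     Units.map e3.toRingHom.toMonoidHom (f (Multiplicative.ofAdd (n • x0))),
     ⟨π (f (Multiplicative.ofAdd (n • x0))), key n⟩)
  have Tinj : Function.Injective T := by
    intro m n hmn
    set um := f (Multiplicative.ofAdd (m • x0)) with hum
    set un := f (Multiplicative.ofAdd (n • x0)) with hun
    have h1 : e1 (um : R8) = e1 (un : R8) :=
      congrArg (fun p : ℤˣ × ℤˣ × GaussianIntˣ × (Units.torsion K8) => ((p.1 : ℤˣ) : ℤ)) hmn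
    have h2 : e2 (um : R8) = e2 (un : R8) :=
      congrArg (fun p : ℤˣ × ℤˣ × GaussianIntˣ × (Units.torsion K8) => ((p.2.1 : ℤˣ) : ℤ)) hmn
    have h3 : e3 (um : R8) = e3 (un : R8) :=
      congrArg (fun p : ℤˣ × ℤˣ × GaussianIntˣ × (Units.torsion K8) =>
        ((p.2.2.1 : GaussianIntˣ) : GaussianInt)) hmn
    have h4 : e4 (um : R8) = e4 (un : R8) :=
      congrArg (fun p : ℤˣ × ℤˣ × GaussianIntˣ × (Units.torsion K8) =>
        (((p.2.2.2 : Units.torsion K8) : (𝓞 K8)ˣ) : 𝓞 K8)) hmn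
    have huv : (um : R8) = (un : R8) := by
      have hz := evals_zero ((um : R8) - (un : R8))
        (by rw [map_sub, h1, sub_self]) (by rw [map_sub, h2, sub_self])
        (by rw [map_sub, h3, sub_self]) (by rw [map_sub, h4, sub_self])
      exact sub_eq_zero.mp hz
    have huu : um = un := Units.ext huv
    have hx : m • x0 = n • x0 := Multiplicative.ofAdd.injective (hf (by rw [← hum, ← hun]; exact huu))
    have h1' : m * x0.1 = n * x0.1 := congrArg Prod.fst hx
    have h2' : m * x0.2 = n * x0.2 := congrArg Prod.snd hx
    by_cases hc : x0.1 = 0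
    · have hc2 : x0.2 ≠ 0 := by
        intro h
        exact hx0ne (Prod.ext hc h)
      exact mul_right_cancel₀ hc2 h2'
    · exact mul_right_cancel₀ hc h1'
  haveI := Finite.of_injective T Tinj
  exact not_finite ℤ


/-- **Statement.** The unit group of the integral group ring of the cyclic group of
order 8 is infinite, but contains no free abelian subgroup of rank two. -/
theorem units_int_group_ring_C8
    : Infinite (MonoidAlgebra ℤ (Multiplicative (ZMod 8)))ˣ ∧
      ¬ ∃ f : Multiplicative (ℤ × ℤ) →* (MonoidAlgebra ℤ (Multiplicative (ZMod 8)))ˣ,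
        Function.Injective f := by
  exact ⟨infinite_units, no_Z2⟩
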